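/- Let G be a group of order 16 with a subgroup K = ⟨h, j⟩ ≅ C4 × C2 of index 2 (h of order 4, j of order 2), such that there exists t ∈ G with j^t = h²j. If additionally some such t can be chosen of order 2, then G is isomorphic to the group N16 = ⟨(1,2,3,4)(5,6,7,8), (5,7)(6,8), (1,5)(2,6)(3,7)(4,8)⟩ ≤ Sym 8. -/

import Mathlib

open Equiv

set_option maxRecDepth 100000

/-- The group `N16`, a group of order 16, as a subgroup of `Sym 8`
(with points labelled `0, …, 7` instead of `1, …, 8`). -/
def N16 : Subgroup (Perm (Fin 8)) :=
  Subgroup.closure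
    {c[0, 1, 2, 3] * c[4, 5, 6, 7], c[4, 6] * c[5, 7],
     c[0, 4] * c[1, 5] * c[2, 6] * c[3, 7]}

/-- The abstract model of the group: `C4 × C2 × C2` as a set, with a twisted multiplication. -/
structure M16 where
  a : ZMod 4
  b : ZMod 2
  c : ZMod 2
deriving DecidableEq, Fintype

namespace M16

instance : Mul M16 :=
  ⟨fun x y => ⟨x.a + y.a + ((2 * (x.c.val * y.b.val) : ℕ) : ZMod 4), x.b + y.b, x.c + y.c⟩⟩
instance : One M16 := ⟨⟨0, 0, 0⟩⟩
instance : Inv M16 := ⟨fun x => ⟨-x.a + ((2 * (x.c.val * x.b.val) : ℕ) : ZMod 4), -x.b, -x.c⟩⟩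

set_option maxHeartbeats 4000000 in
instance : Group M16 where
  mul_assoc := by decide
  one_mul := by decide
  mul_one := by decide
  inv_mul_cancel := by decide

theorem card_eq : Nat.card M16 = 16 := by
  rw [Nat.card_eq_fintype_card]; rfl

end M16

section Generic

variable {H : Type*} [Group H] {h j t : H}

/-- Multiplication rule for products `h^a j^b` when `h j = j h`. -/
theorem ab_mul (chj : h * j = j * h) (a b a' b' : ℕ) :
    (h ^ a * j ^ b) * (h ^ a' * j ^ b') = h ^ (a + a') * j ^ (b + b') := by
  have c : j ^ b * h ^ a' = h ^ a' * j ^ b := ((show Commute h j from chj).symm.pow_pow b a').eq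
  calc (h ^ a * j ^ b) * (h ^ a' * j ^ b') = h ^ a * ((j ^ b * h ^ a') * j ^ b') := by
        simp only [mul_assoc]
    _ = h ^ a * ((h ^ a' * j ^ b) * j ^ b') := by rw [c]
    _ = (h ^ a * h ^ a') * (j ^ b * j ^ b') := by simp only [mul_assoc]
    _ = h ^ (a + a') * j ^ (b + b') := by rw [← pow_add, ← pow_add]

/-- Every element of `⟨h, j⟩` has the form `h^a * j^b`. -/
theorem mem_form (h4 : h ^ 4 = 1) (j2 : j ^ 2 = 1) (chj : h * j = j * h) {x : H}
    (hx : x ∈ Subgroup.closure ({h, j} : Set H)) : ∃ a b : ℕ, x = h ^ a * j ^ b := by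
  induction hx using Subgroup.closure_induction with
  | mem x hx =>
    rcases hx with rfl | rfl
    · exact ⟨1, 0, by simp⟩
    · exact ⟨0, 1, by simp⟩
  | one => exact ⟨0, 0, by simp⟩
  | mul x y hx hy ihx ihy =>
    obtain ⟨a, b, rfl⟩ := ihx
    obtain ⟨a', b', rfl⟩ := ihy
    exact ⟨a + a', b + b', ab_mul chj a b a' b'⟩
  | inv x hx ihx =>
    obtain ⟨a, b, rfl⟩ := ihx
    refine ⟨3 * a, b, inv_eq_of_mul_eq_one_right ?_⟩
    rw [ab_mul chj, show a + 3 * a = 4 * a by ring, show b + b = 2 * b by ring,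
      pow_mul, pow_mul, h4, j2, one_pow, one_pow, one_mul]

/-- The multiplication rule for normal-form words. -/
theorem key_nat (chj : h * j = j * h) (cht : h * t = t * h) (rel : t * j = h ^ 2 * (j * t))
    (p q r p' q' r' : ℕ) :
    (h ^ p * j ^ q * t ^ r) * (h ^ p' * j ^ q' * t ^ r') =
      h ^ (p + p' + 2 * (r * q')) * j ^ (q + q') * t ^ (r + r') := by
  have Chj : Commute h j := chj
  have Cht : Commute h t := cht
  have c1 : ∀ n m : ℕ, t ^ n * h ^ m = h ^ m * t ^ n := fun n m => (Cht.symm.pow_pow n m).eq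
  have c2 : ∀ n m : ℕ, j ^ n * h ^ m = h ^ m * j ^ n := fun n m => (Chj.symm.pow_pow n m).eq
  have step1 : ∀ r : ℕ, t ^ r * j = h ^ (2 * r) * (j * t ^ r) := by
    intro r
    induction r with
    | zero => simp
    | succ n ih =>
      calc t ^ (n + 1) * j = t ^ n * (t * j) := by rw [pow_succ, mul_assoc]
        _ = (t ^ n * h ^ 2) * (j * t) := by rw [rel, mul_assoc]
        _ = h ^ 2 * ((t ^ n * j) * t) := by rw [c1 n 2]; simp only [mul_assoc]
        _ = h ^ 2 * ((h ^ (2 * n) * (j * t ^ n)) * t) := by rw [ih]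
        _ = (h ^ 2 * h ^ (2 * n)) * (j * (t ^ n * t)) := by simp only [mul_assoc]
        _ = h ^ (2 * (n + 1)) * (j * t ^ (n + 1)) := by
            rw [← pow_add, ← pow_succ, show 2 + 2 * n = 2 * (n + 1) by ring]
  have step2 : ∀ q : ℕ, t ^ r * j ^ q = h ^ (2 * (r * q)) * (j ^ q * t ^ r) := by
    intro q
    induction q with
    | zero => simp
    | succ n ih =>
      calc t ^ r * j ^ (n + 1) = (t ^ r * j ^ n) * j := by rw [pow_succ, mul_assoc]
        _ = h ^ (2 * (r * n)) * (j ^ n * (t ^ r * j)) := by rw [ih]; simp only [mul_assoc]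
        _ = h ^ (2 * (r * n)) * (j ^ n * (h ^ (2 * r) * (j * t ^ r))) := by rw [step1 r]
        _ = h ^ (2 * (r * n)) * ((j ^ n * h ^ (2 * r)) * (j * t ^ r)) := by
            simp only [mul_assoc]
        _ = (h ^ (2 * (r * n)) * h ^ (2 * r)) * ((j ^ n * j) * t ^ r) := by
            rw [c2 n (2 * r)]; simp only [mul_assoc]
        _ = h ^ (2 * (r * (n + 1))) * (j ^ (n + 1) * t ^ r) := by
            rw [← pow_add, ← pow_succ, show 2 * (r * n) + 2 * r = 2 * (r * (n + 1)) by ring]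
  calc (h ^ p * j ^ q * t ^ r) * (h ^ p' * j ^ q' * t ^ r')
      = h ^ p * (j ^ q * ((t ^ r * h ^ p') * (j ^ q' * t ^ r'))) := by simp only [mul_assoc]
    _ = h ^ p * (j ^ q * (h ^ p' * ((t ^ r * j ^ q') * t ^ r'))) := by
        rw [c1 r p']; simp only [mul_assoc]
    _ = h ^ p * ((j ^ q * h ^ p') * ((h ^ (2 * (r * q')) * (j ^ q' * t ^ r)) * t ^ r')) := by
        rw [step2 q']; simp only [mul_assoc]
    _ = h ^ p * (h ^ p' * (j ^ q * (h ^ (2 * (r * q')) * ((j ^ q' * t ^ r) * t ^ r')))) := by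
        rw [c2 q p']; simp only [mul_assoc]
    _ = h ^ p * (h ^ p' * ((j ^ q * h ^ (2 * (r * q'))) * (j ^ q' * (t ^ r * t ^ r')))) := by
        simp only [mul_assoc]
    _ = (h ^ p * (h ^ p' * h ^ (2 * (r * q')))) * ((j ^ q * j ^ q') * (t ^ r * t ^ r')) := by
        rw [c2 q (2 * (r * q'))]; simp only [mul_assoc]
    _ = h ^ (p + p' + 2 * (r * q')) * j ^ (q + q') * t ^ (r + r') := by
        rw [← pow_add, ← pow_add, ← pow_add, ← pow_add, ← add_assoc]
        simp only [mul_assoc]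

/-- The normal-form map from `M16`. -/
def Ffun (h j t : H) : M16 → H := fun x => h ^ x.a.val * j ^ x.b.val * t ^ x.c.val

theorem F_mul (h4 : h ^ 4 = 1) (j2 : j ^ 2 = 1) (t2 : t ^ 2 = 1)
    (chj : h * j = j * h) (cht : h * t = t * h) (rel : t * j = h ^ 2 * (j * t))
    (x y : M16) : Ffun h j t (x * y) = Ffun h j t x * Ffun h j t y := by
  obtain ⟨xa, xb, xc⟩ := x
  obtain ⟨ya, yb, yc⟩ := y
  show h ^ (xa + ya + ((2 * (xc.val * yb.val) : ℕ) : ZMod 4)).val * j ^ ((xb + yb).val) *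
      t ^ ((xc + yc).val) = _
  have E1 : h ^ (xa + ya + ((2 * (xc.val * yb.val) : ℕ) : ZMod 4)).val =
      h ^ (xa.val + ya.val + 2 * (xc.val * yb.val)) := by
    have e1 : (xa + ya + ((2 * (xc.val * yb.val) : ℕ) : ZMod 4)).val % 4 =
        (xa.val + ya.val + 2 * (xc.val * yb.val)) % 4 := by
      rw [ZMod.val_add, ZMod.val_add, ZMod.val_natCast]; omega
    calc h ^ (xa + ya + ((2 * (xc.val * yb.val) : ℕ) : ZMod 4)).val
        = h ^ ((xa + ya + ((2 * (xc.val * yb.val) : ℕ) : ZMod 4)).val % 4) :=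
          pow_eq_pow_mod _ h4
      _ = h ^ ((xa.val + ya.val + 2 * (xc.val * yb.val)) % 4) := by rw [e1]
      _ = h ^ (xa.val + ya.val + 2 * (xc.val * yb.val)) := (pow_eq_pow_mod _ h4).symm
  have E2 : j ^ ((xb + yb).val) = j ^ (xb.val + yb.val) := by
    calc j ^ ((xb + yb).val) = j ^ ((xb.val + yb.val) % 2) := by rw [ZMod.val_add]
      _ = j ^ (xb.val + yb.val) := (pow_eq_pow_mod _ j2).symm
  have E3 : t ^ ((xc + yc).val) = t ^ (xc.val + yc.val) := by
    calc t ^ ((xc + yc).val) = t ^ ((xc.val + yc.val) % 2) := by rw [ZMod.val_add]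
      _ = t ^ (xc.val + yc.val) := (pow_eq_pow_mod _ t2).symm
  rw [E1, E2, E3]
  exact (key_nat chj cht rel xa.val xb.val xc.val ya.val yb.val yc.val).symm

/-- The normal-form monoid hom from `M16`. -/
def Fhom (h j t : H) (h4 : h ^ 4 = 1) (j2 : j ^ 2 = 1) (t2 : t ^ 2 = 1)
    (chj : h * j = j * h) (cht : h * t = t * h) (rel : t * j = h ^ 2 * (j * t)) :
    M16 →* H where
  toFun := Ffun h j t
  map_one' := by
    show h ^ (0 : ZMod 4).val * j ^ (0 : ZMod 2).val * t ^ (0 : ZMod 2).val = 1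
    simp
  map_mul' := F_mul h4 j2 t2 chj cht rel

theorem Fhom_h (h4 : h ^ 4 = 1) (j2 : j ^ 2 = 1) (t2 : t ^ 2 = 1)
    (chj : h * j = j * h) (cht : h * t = t * h) (rel : t * j = h ^ 2 * (j * t)) :
    Fhom h j t h4 j2 t2 chj cht rel ⟨1, 0, 0⟩ = h := by
  show h ^ (1 : ZMod 4).val * j ^ (0 : ZMod 2).val * t ^ (0 : ZMod 2).val = h
  rw [show (1 : ZMod 4).val = 1 from rfl]
  simp

theorem Fhom_j (h4 : h ^ 4 = 1) (j2 : j ^ 2 = 1) (t2 : t ^ 2 = 1)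
    (chj : h * j = j * h) (cht : h * t = t * h) (rel : t * j = h ^ 2 * (j * t)) :
    Fhom h j t h4 j2 t2 chj cht rel ⟨0, 1, 0⟩ = j := by
  show h ^ (0 : ZMod 4).val * j ^ (1 : ZMod 2).val * t ^ (0 : ZMod 2).val = j
  rw [show (1 : ZMod 2).val = 1 from rfl]
  simp

theorem Fhom_t (h4 : h ^ 4 = 1) (j2 : j ^ 2 = 1) (t2 : t ^ 2 = 1)
    (chj : h * j = j * h) (cht : h * t = t * h) (rel : t * j = h ^ 2 * (j * t)) :
    Fhom h j t h4 j2 t2 chj cht rel ⟨0, 0, 1⟩ = t := by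
  show h ^ (0 : ZMod 4).val * j ^ (0 : ZMod 2).val * t ^ (1 : ZMod 2).val = t
  rw [show (1 : ZMod 2).val = 1 from rfl]
  simp

/-- The key isomorphism lemma. -/
theorem key_iso (hcard : Nat.card H = 16) (h j t : H)
    (h4 : h ^ 4 = 1) (h2ne : h ^ 2 ≠ 1) (j2 : j ^ 2 = 1) (t2 : t ^ 2 = 1)
    (chj : h * j = j * h) (cht : h * t = t * h) (rel : t * j = h ^ 2 * (j * t))
    (hK8 : Nat.card (Subgroup.closure ({h, j} : Set H)) = 8) :
    Nonempty (M16 ≃* H) := by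
  have : Finite H := Nat.finite_of_card_ne_zero (by omega)
  set g := Fhom h j t h4 j2 t2 chj cht rel with hg
  have hS : Subgroup.closure ({h, j, t} : Set H) = ⊤ := by
    have hle : Subgroup.closure ({h, j} : Set H) ≤ Subgroup.closure {h, j, t} :=
      Subgroup.closure_mono (by intro x hx; rcases hx with rfl | rfl <;> simp)
    have d1 : (8 : ℕ) ∣ Nat.card (Subgroup.closure ({h, j, t} : Set H)) :=
      hK8 ▸ Subgroup.card_dvd_of_le hle
    have d2 : Nat.card (Subgroup.closure ({h, j, t} : Set H)) ∣ 16 :=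
      hcard ▸ Subgroup.card_subgroup_dvd_card _
    have dpos : 0 < Nat.card (Subgroup.closure ({h, j, t} : Set H)) := Nat.card_pos
    have dle : Nat.card (Subgroup.closure ({h, j, t} : Set H)) ≤ 16 :=
      Nat.le_of_dvd (by norm_num) d2
    have hcases : Nat.card (Subgroup.closure ({h, j, t} : Set H)) = 8 ∨
        Nat.card (Subgroup.closure ({h, j, t} : Set H)) = 16 := by omega
    rcases hcases with hc | hc
    · exfalso
      have heq : Subgroup.closure ({h, j} : Set H) = Subgroup.closure ({h, j, t} : Set H) :=
        Subgroup.eq_of_le_of_card_ge hle (by omega)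
      have htmem : t ∈ Subgroup.closure ({h, j} : Set H) := by
        rw [heq]; exact Subgroup.subset_closure (by simp)
      obtain ⟨a, b, hab⟩ := mem_form h4 j2 chj htmem
      have ctj : t * j = j * t := by
        have c1 : Commute (h ^ a) j := (show Commute h j from chj).pow_left a
        have c2 : Commute (j ^ b) j := (Commute.refl j).pow_left b
        have : Commute (h ^ a * j ^ b) j := c1.mul_left c2
        rw [hab]; exact this.eq
      rw [ctj] at rel
      exact h2ne (right_eq_mul.mp rel)
    · exact Subgroup.eq_top_of_card_eq _ (by rw [hc, hcard])
  have hsurj : Function.Surjective g := by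
    have hle : Subgroup.closure ({h, j, t} : Set H) ≤ g.range := by
      rw [Subgroup.closure_le]
      rintro y (rfl | rfl | rfl)
      · exact ⟨⟨1, 0, 0⟩, Fhom_h h4 j2 t2 chj cht rel⟩
      · exact ⟨⟨0, 1, 0⟩, Fhom_j h4 j2 t2 chj cht rel⟩
      · exact ⟨⟨0, 0, 1⟩, Fhom_t h4 j2 t2 chj cht rel⟩
    intro x
    exact hle (hS ▸ Subgroup.mem_top x)
  have hbij : Function.Bijective g :=
    (Nat.bijective_iff_surjective_and_card g).mpr ⟨hsurj, by rw [M16.card_eq, hcard]⟩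
  exact ⟨MulEquiv.ofBijective g hbij⟩

end Generic

section N16side

def permA : Perm (Fin 8) := c[0, 1, 2, 3] * c[4, 5, 6, 7]
def permB : Perm (Fin 8) := c[4, 6] * c[5, 7]
def permC : Perm (Fin 8) := c[0, 4] * c[1, 5] * c[2, 6] * c[3, 7]

theorem permA4 : permA ^ 4 = 1 := by decide
theorem permB2 : permB ^ 2 = 1 := by decide
theorem permC2 : permC ^ 2 = 1 := by decide
theorem permAB : permA * permB = permB * permA := by decide
theorem permAC : permA * permC = permC * permA := by decide
theorem permCB : permC * permB = permA ^ 2 * (permB * permC) := by decide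

/-- The concrete normal-form hom into `Perm (Fin 8)`. -/
def fN : M16 →* Perm (Fin 8) := Fhom permA permB permC permA4 permB2 permC2 permAB permAC permCB

/-- Reading off the parameters from a permutation in the image. -/
def rF (p : Perm (Fin 8)) : M16 :=
  let a : ℕ := (if 4 ≤ (p 0).val then (p 4).val else (p 0).val) % 4
  let w : ℕ := if 4 ≤ (p 0).val then (p 0).val else (p 4).val
  ⟨(a : ZMod 4), (if (w + 4 - a) % 4 = 2 then 1 else 0), (if 4 ≤ (p 0).val then 1 else 0)⟩

set_option maxHeartbeats 1000000 in
theorem rF_F : ∀ x : M16, rF (Ffun permA permB permC x) = x := by decide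

theorem fN_inj : Function.Injective fN := by
  have hli : Function.LeftInverse rF (Ffun permA permB permC) := rF_F
  exact hli.injective

theorem fN_range : fN.range = N16 := by
  apply le_antisymm
  · rintro x ⟨m, rfl⟩
    have hA : permA ∈ N16 := Subgroup.subset_closure (by left; rfl)
    have hB : permB ∈ N16 := Subgroup.subset_closure (by right; left; rfl)
    have hC : permC ∈ N16 := Subgroup.subset_closure (by right; right; rfl)
    exact mul_mem (mul_mem (pow_mem hA _) (pow_mem hB _)) (pow_mem hC _)
  · rw [N16]
    rw [Subgroup.closure_le]
    rintro y (rfl | rfl | rfl)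
    · exact ⟨⟨1, 0, 0⟩, Fhom_h permA4 permB2 permC2 permAB permAC permCB⟩
    · exact ⟨⟨0, 1, 0⟩, Fhom_j permA4 permB2 permC2 permAB permAC permCB⟩
    · exact ⟨⟨0, 0, 1⟩, Fhom_t permA4 permB2 permC2 permAB permAC permCB⟩

noncomputable def isoMN : M16 ≃* N16 :=
  (MonoidHom.ofInjective fN_inj).trans (MulEquiv.subgroupCongr fN_range)

end N16side

theorem contra_h2j {H : Type*} [Group H] {h jj : H} (hh : orderOf h = 4)
    (hj : orderOf jj = 2) (j2 : jj ^ 2 = 1) (e : h = h ^ 2 * jj) : False := by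
  have e1 : h * jj = h * h := by
    conv_lhs => rw [e]
    rw [mul_assoc, ← pow_two, j2, mul_one, pow_two]
  have e2 : jj = h := mul_left_cancel e1
  rw [e2] at hj
  rw [hj] at hh
  exact absurd hh (by norm_num)

theorem contra_h3 {H : Type*} [Group H] {h : H} (h2ne : h ^ 2 ≠ 1) (e : h = h ^ 3) : False := by
  have e1 : 1 * h = h ^ 2 * h := by
    rw [one_mul, ← pow_succ]
    exact e
  exact h2ne (mul_right_cancel e1).symm

theorem conj_fix {H : Type*} [Group H] {x t : H} (h : t⁻¹ * x * t = x) : x * t = t * x := by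
  calc x * t = t * (t⁻¹ * x * t) := by group
    _ = t * x := by rw [h]

theorem conj_mul_dist {H : Type*} [Group H] (t x y : H) :
    t⁻¹ * (x * y) * t = (t⁻¹ * x * t) * (t⁻¹ * y * t) := by group

theorem conj_pow_dist {H : Type*} [Group H] (t x : H) (n : ℕ) :
    t⁻¹ * x ^ n * t = (t⁻¹ * x * t) ^ n := by
  have := map_pow (MulAut.conj t⁻¹) x n
  simpa [MulAut.conj_apply, mul_assoc] using this

/-- Let `G` be a group of order 16 with a subgroup `K = ⟨h, j⟩ ≅ C4 × C2` of index 2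
(`h` of order 4, `j` of order 2), and suppose there is an element `t` of order 2 with
`j^t = h²j`.  Then `G ≅ N16`. -/
theorem order_sixteen_with_involution_fusing_is_N16
    (G : Type*) [Group G] (hcard : Nat.card G = 16)
    (h j : G) (hh : orderOf h = 4) (hj : orderOf j = 2)
    (K : Subgroup G) (hK : K = Subgroup.closure {h, j})
    (hKiso : Nonempty (K ≃* Multiplicative (ZMod 4 × ZMod 2)))
    (hKindex : K.index = 2)
    (t : G) (ht2 : orderOf t = 2) (htconj : t⁻¹ * j * t = h ^ 2 * j) :
    Nonempty (G ≃* N16) := by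
  obtain ⟨e⟩ := hKiso
  have hfin : Finite G := Nat.finite_of_card_ne_zero (by omega)
  have hhK : h ∈ K := hK ▸ Subgroup.subset_closure (by simp)
  have hjK : j ∈ K := hK ▸ Subgroup.subset_closure (by simp)
  have h4 : h ^ 4 = 1 := by rw [← hh]; exact pow_orderOf_eq_one h
  have j2 : j ^ 2 = 1 := by rw [← hj]; exact pow_orderOf_eq_one j
  have t2 : t ^ 2 = 1 := by rw [← ht2]; exact pow_orderOf_eq_one t
  have h2ne : h ^ 2 ≠ 1 := by
    intro hcon
    have := orderOf_dvd_of_pow_eq_one hcon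
    rw [hh] at this
    omega
  have chj : h * j = j * h := by
    have : (⟨h, hhK⟩ : K) * ⟨j, hjK⟩ = ⟨j, hjK⟩ * ⟨h, hhK⟩ :=
      e.injective (by rw [map_mul, map_mul, mul_comm])
    exact Subtype.ext_iff.mp this
  have hK8 : Nat.card (Subgroup.closure ({h, j} : Set G)) = 8 := by
    have hmi := K.card_mul_index
    rw [hKindex, hcard] at hmi
    rw [← hK]
    omega
  have tt1 : t * t = 1 := by rw [← pow_two]; exact t2
  have tinv : t⁻¹ = t := inv_eq_of_mul_eq_one_left tt1
  have rel : t * j = h ^ 2 * (j * t) := by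
    have e1 : t * j * t = h ^ 2 * j := by
      have e0 := htconj
      rw [tinv] at e0
      exact e0
    calc t * j = (t * j * t) * t := by rw [mul_assoc (t * j), tt1, mul_one]
      _ = (h ^ 2 * j) * t := by rw [e1]
      _ = h ^ 2 * (j * t) := by rw [mul_assoc]
  have htK : t ∉ K := by
    intro htKmem
    obtain ⟨a, b, hab⟩ := mem_form h4 j2 chj (hK ▸ htKmem)
    have ctj : t * j = j * t := by
      have c1 : Commute (h ^ a) j := (show Commute h j from chj).pow_left a
      have c2 : Commute (j ^ b) j := (Commute.refl j).pow_left b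
      rw [hab]; exact (c1.mul_left c2).eq
    rw [ctj] at rel
    exact h2ne (right_eq_mul.mp rel)
  have hz : t⁻¹ * h * t ∈ K := by
    have h1 : t⁻¹ * h ∉ K := by
      intro hm
      have h2m : t⁻¹ ∈ K := by
        have := K.mul_mem hm (K.inv_mem hhK)
        simpa [mul_assoc] using this
      exact htK (by simpa using K.inv_mem h2m)
    exact (Subgroup.mul_mem_iff_of_index_two hKindex).mpr (iff_of_false h1 htK)
  obtain ⟨a0, b0, hab0⟩ := mem_form h4 j2 chj (hK ▸ hz)
  obtain ⟨a, ha4, b, hb2, hred⟩ : ∃ a, a < 4 ∧ ∃ b, b < 2 ∧ t⁻¹ * h * t = h ^ a * j ^ b :=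
    ⟨a0 % 4, by omega, b0 % 2, by omega, by
      rw [hab0, pow_eq_pow_mod a0 h4, pow_eq_pow_mod b0 j2]⟩
  have conj2 : t⁻¹ * (t⁻¹ * h * t) * t = h := by
    rw [tinv]
    calc t * (t * h * t) * t = ((t * t) * h) * (t * t) := by simp only [mul_assoc]
      _ = h := by rw [tt1, one_mul, mul_one]
  have master : h = (h ^ a * j ^ b) ^ a * (h ^ 2 * j) ^ b := by
    have step : t⁻¹ * (t⁻¹ * h * t) * t = (t⁻¹ * h * t) ^ a * (t⁻¹ * j * t) ^ b := by
      conv_lhs => rw [hred]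
      rw [conj_mul_dist, conj_pow_dist, conj_pow_dist]
    have master0 := conj2.symm.trans step
    rw [hred, htconj] at master0
    exact master0
  have master2 : h = h ^ (a * a + 2 * b) * j ^ (b * a + b) := by
    have e := master
    rw [((show Commute h j from chj).pow_pow a b).mul_pow,
      ((show Commute h j from chj).pow_left 2).mul_pow, ← pow_mul, ← pow_mul, ← pow_mul,
      ab_mul chj] at e
    exact e
  -- it suffices to produce `M16 ≃* G`
  suffices hgood : Nonempty (M16 ≃* G) by
    obtain ⟨w⟩ := hgood
    exact ⟨(w.symm.trans isoMN)⟩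
  interval_cases a <;> interval_cases b
  · -- a = 0, b = 0 : h = 1, contradiction
    norm_num at master2
    exact absurd (by rw [master2, one_pow] : h ^ 2 = 1) h2ne
  · -- a = 0, b = 1 : h = h^2 * j, contradiction
    norm_num at master2
    exact absurd master2 (contra_h2j hh hj j2)
  · -- a = 1, b = 0 : good case
    norm_num at hred
    have cht : h * t = t * h := conj_fix hred
    obtain ⟨w⟩ := key_iso hcard h j t h4 h2ne j2 t2 chj cht rel hK8
    exact ⟨w⟩
  · -- a = 1, b = 1 : h = h^3, contradiction
    norm_num [j2] at master2
    exact absurd master2 (contra_h3 h2ne)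
  · -- a = 2, b = 0 : h = h^4 = 1, contradiction
    norm_num [h4] at master2
    exact absurd (by rw [master2, one_pow] : h ^ 2 = 1) h2ne
  · -- a = 2, b = 1 : h = h^6 * j^3 = h^2 * j, contradiction
    norm_num at master2
    rw [pow_eq_pow_mod 6 h4, pow_eq_pow_mod 3 j2] at master2
    norm_num at master2
    exact absurd master2 (contra_h2j hh hj j2)
  · -- a = 3, b = 0 : good case after replacing h by h * j
    norm_num at hred
    have j4 : j ^ 4 = 1 := by rw [show (4 : ℕ) = 2 * 2 from rfl, pow_mul, j2, one_pow]
    have h'4 : (h * j) ^ 4 = 1 := by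
      rw [(show Commute h j from chj).mul_pow, h4, j4, one_mul]
    have h'2 : (h * j) ^ 2 = h ^ 2 := by
      rw [(show Commute h j from chj).mul_pow, j2, mul_one]
    have h'2ne : (h * j) ^ 2 ≠ 1 := by rw [h'2]; exact h2ne
    have chj' : (h * j) * j = j * (h * j) := by
      rw [show j * (h * j) = (j * h) * j from (mul_assoc j h j).symm, ← chj]
    have rel' : t * j = (h * j) ^ 2 * (j * t) := by rw [h'2]; exact rel
    have cht' : (h * j) * t = t * (h * j) := by
      apply conj_fix
      have e2 : t⁻¹ * (h * j) * t = (t⁻¹ * h * t) * (t⁻¹ * j * t) := conj_mul_dist t h j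
      rw [hred, htconj] at e2
      rw [e2, ← mul_assoc, ← pow_add]
      norm_num
      rw [pow_eq_pow_mod 5 h4]
      norm_num
    have hK8' : Nat.card (Subgroup.closure ({h * j, j} : Set G)) = 8 := by
      have hseteq : Subgroup.closure ({h * j, j} : Set G) = Subgroup.closure {h, j} := by
        apply le_antisymm
        · rw [Subgroup.closure_le]
          intro x hx
          simp only [Set.mem_insert_iff, Set.mem_singleton_iff] at hx
          rcases hx with h1 | h1 <;> rw [h1]
          · exact mul_mem (Subgroup.subset_closure (by simp)) (Subgroup.subset_closure (by simp))
          · exact Subgroup.subset_closure (by simp)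
        · rw [Subgroup.closure_le]
          intro x hx
          simp only [Set.mem_insert_iff, Set.mem_singleton_iff] at hx
          rcases hx with h1 | h1 <;> rw [h1]
          · have e3 : (h * j) * j = h := by rw [mul_assoc, ← pow_two, j2, mul_one]
            have e4 : (h * j) * j ∈ Subgroup.closure ({h * j, j} : Set G) :=
              mul_mem (Subgroup.subset_closure (by simp)) (Subgroup.subset_closure (by simp))
            rwa [e3] at e4
          · exact Subgroup.subset_closure (by simp)
      rw [hseteq]; exact hK8
    obtain ⟨w⟩ := key_iso hcard (h * j) j t h'4 h'2ne j2 t2 chj' cht' rel' hK8'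
    exact ⟨w⟩
  · -- a = 3, b = 1 : h = h^11 * j^4 = h^3, contradiction
    norm_num at master2
    rw [pow_eq_pow_mod 11 h4, pow_eq_pow_mod 4 j2] at master2
    norm_num at master2
    exact absurd master2 (contra_h3 h2ne)
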